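/- Let Y be a finite set and (A, ≤_A) a well-founded partial order. Then the permuted-pointwise order ≤_perm on the quotient of Y → A by the equivalence a ≡_perm b (both a ≤_perm b and b ≤_perm a) is a well-founded partial order; in particular, there is no infinite sequence of functions a₀, a₁, ... : Y → A and bijections σ₁, σ₂, ... of Y such that for every i, a_{i+1}(σ_{i+1}(y)) ≤_A a_i(y) for all y ∈ Y and a_{i+1}(σ_{i+1}(x_i)) <_A a_i(x_i) for some x_i ∈ Y. -/

import Mathlib

/-- Well-foundedness of the permuted-pointwise order: for finite `Y` and a
well-founded partial order `A`, there is no infinite sequence of functions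
`a₀, a₁, … : Y → A` and bijections `σ₁, σ₂, …` of `Y` such that each step is
pointwise `≤` up to the permutation, with at least one strict decrease. -/
theorem stmt_7 (Y : Type*) [Fintype Y] (A : Type*) [PartialOrder A]
    (hwf : WellFounded ((· < ·) : A → A → Prop)) :
    ¬ ∃ (a : ℕ → Y → A) (σ : ℕ → Y ≃ Y),
      ∀ i, (∀ y, a (i + 1) (σ (i + 1) y) ≤ a i y) ∧
        ∃ x, a (i + 1) (σ (i + 1) x) < a i x := by
  rintro ⟨a, σ, h⟩
  haveI : WellFoundedLT A := ⟨hwf⟩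
  -- compose permutations
  let e : ℕ → Y ≃ Y := fun i => Nat.rec (Equiv.refl Y) (fun n en => en.trans (σ (n + 1))) i
  have he : ∀ i, e (i + 1) = (e i).trans (σ (i + 1)) := fun i => rfl
  let c : ℕ → Y → A := fun i y => a i (e i y)
  have hdec : ∀ i, c (i + 1) < c i := by
    intro i
    obtain ⟨hle, x, hx⟩ := h i
    constructor
    · intro y
      exact hle (e i y)
    · intro hcc
      have := hcc ((e i).symm x)
      simp only [c, he, Equiv.trans_apply, Equiv.apply_symm_apply] at this
      exact absurd this (not_le_of_gt hx)
  exact (RelEmbedding.natGT c hdec).not_wellFounded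
    (Pi.wellFoundedLT.wf)
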